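/- Let T ∈ G be hyperbolic and let S ∈ G satisfy S ∘ T = T ∘ S. Then S is either hyperbolic, or S is boundary elliptic; in particular S is neither parabolic nor regular elliptic. -/

import Mathlib

noncomputable section

variable {H : Type*} [NormedAddCommGroup H] [InnerProductSpace ℂ H] [CompleteSpace H]

/-- The Hermitian form `A((x,z),(y,w)) = ⟨x,y⟩ - z·conj w` on `H ⊕ ℂ`, linear in the
first argument (the paper's convention); `⟨x,y⟩` (linear in `x`) is `inner y x` in Mathlib. -/
def formA (u v : H × ℂ) : ℂ :=
  (inner ℂ v.1 u.1 : ℂ) - u.2 * (starRingEnd ℂ) v.2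

/-- The standard inner product of the Hilbert space `H ⊕ ℂ`, linear in the first argument. -/
def ipStd (u v : H × ℂ) : ℂ :=
  (inner ℂ v.1 u.1 : ℂ) + u.2 * (starRingEnd ℂ) v.2

/-- Membership in the group `G` of bounded bijective linear maps preserving `A`. -/
def memG (T : (H × ℂ) →L[ℂ] (H × ℂ)) : Prop :=
  Function.Bijective T ∧ ∀ u v : H × ℂ, formA (T u) (T v) = formA u v

/-- `T` is elliptic: it has an eigenvector `(x,1)` with `‖x‖ < 1`. -/
def IsEllipticG (T : (H × ℂ) →L[ℂ] (H × ℂ)) : Prop :=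
  ∃ x : H, ‖x‖ < 1 ∧ ∃ μ : ℂ, T (x, 1) = μ • ((x, 1) : H × ℂ)

/-- Points `x` of the closed unit ball with `(x,1)` an eigenvector of `T`. -/
def fixedBall (T : (H × ℂ) →L[ℂ] (H × ℂ)) : Set H :=
  {x : H | ‖x‖ ≤ 1 ∧ ∃ μ : ℂ, T (x, 1) = μ • ((x, 1) : H × ℂ)}

/-- `T` is hyperbolic: not elliptic, with exactly two fixed points in the closed ball. -/
def IsHyperbolicG (T : (H × ℂ) →L[ℂ] (H × ℂ)) : Prop :=
  ¬ IsEllipticG T ∧ ∃ x y : H, x ≠ y ∧ fixedBall T = {x, y}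

/-- `T` is parabolic: not elliptic, with exactly one fixed point in the closed ball. -/
def IsParabolicG (T : (H × ℂ) →L[ℂ] (H × ℂ)) : Prop :=
  ¬ IsEllipticG T ∧ ∃ x : H, fixedBall T = {x}

/-- `M†`, the `A`-orthogonal complement of a subspace `M` of `H ⊕ ℂ`. -/
def daggerA (M : Submodule ℂ (H × ℂ)) : Submodule ℂ (H × ℂ) where
  carrier := {v | ∀ m ∈ M, formA v m = 0}
  add_mem' := by
    intro a b ha hb m hm
    have h1 := ha m hm
    have h2 := hb m hm
    simp only [formA, Prod.fst_add, Prod.snd_add, inner_add_right, add_mul] at *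
    linear_combination h1 + h2
  zero_mem' := by
    intro m hm
    simp [formA]
  smul_mem' := by
    intro c a ha m hm
    have h1 := ha m hm
    simp only [formA, Prod.smul_fst, Prod.smul_snd, inner_smul_right, smul_eq_mul] at *
    linear_combination c * h1

/-- The norm induced by `A` on a subspace where `A` is positive. -/
def nA (v : H × ℂ) : ℝ := Real.sqrt (formA v v).re

/-- Sequential completeness of a subspace for the norm induced by `A`. -/
def CompleteForA (M : Submodule ℂ (H × ℂ)) : Prop :=
  ∀ f : ℕ → H × ℂ, (∀ n, f n ∈ M) →
    (∀ ε : ℝ, 0 < ε → ∃ N : ℕ, ∀ m n : ℕ, N ≤ m → N ≤ n → nA (f m - f n) < ε) →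
    ∃ v ∈ M, ∀ ε : ℝ, 0 < ε → ∃ N : ℕ, ∀ n : ℕ, N ≤ n → nA (f n - v) < ε

end

section
variable {H : Type*} [NormedAddCommGroup H] [InnerProductSpace ℂ H] [CompleteSpace H]

/-- An elliptic element is boundary elliptic if some time-like eigenvalue has
geometric multiplicity at least two. -/
def IsBoundaryEllipticG (S : (H × ℂ) →L[ℂ] (H × ℂ)) : Prop :=
  IsEllipticG S ∧ ∃ lam : ℂ,
    (∃ v : H × ℂ, S v = lam • v ∧ ∃ c : ℝ, c < 0 ∧ formA v v = (c : ℂ)) ∧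
    (∃ v w : H × ℂ, S v = lam • v ∧ S w = lam • w ∧ LinearIndependent ℂ ![v, w])

/-- An elliptic element is regular elliptic if it is not boundary elliptic. -/
def IsRegularEllipticG (S : (H × ℂ) →L[ℂ] (H × ℂ)) : Prop :=
  IsEllipticG S ∧ ¬ IsBoundaryEllipticG S

set_option linter.unusedSectionVars false
set_option linter.unusedVariables false
lemma formA_smul_left' (a : ℂ) (u v : H × ℂ) : formA (a • u) v = a * formA u v := by
  simp [formA, inner_smul_right, mul_sub]; ring

lemma formA_smul_right' (b : ℂ) (u v : H × ℂ) : formA u (b • v) = (starRingEnd ℂ) b * formA u v := by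
  simp [formA, inner_smul_left, mul_sub]; ring

lemma formA_pair' (a b : H) : formA ((a,(1:ℂ))) ((b,(1:ℂ))) = (inner ℂ b a : ℂ) - 1 := by
  simp [formA]

lemma formA_self' (u : H × ℂ) : formA u u = ((‖u.1‖^2 : ℝ) : ℂ) - ((‖u.2‖)^2 : ℝ) := by
  simp [formA, inner_self_eq_norm_sq_to_K, Complex.mul_conj']

lemma inner_eq_one' (a b : H) (ha : ‖a‖ ≤ 1) (hb : ‖b‖ ≤ 1) (h : (inner ℂ b a : ℂ) = 1) : a = b := by
  have h2 : ‖b - a‖^2 = ‖b‖^2 - 2 * RCLike.re (inner ℂ b a : ℂ) + ‖a‖^2 := norm_sub_sq b a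
  rw [h] at h2
  simp at h2
  have hb2 : ‖b‖^2 ≤ 1 := by nlinarith [norm_nonneg b]
  have ha2 : ‖a‖^2 ≤ 1 := by nlinarith [norm_nonneg a]
  have h3 : ‖b - a‖^2 ≤ 0 := by nlinarith
  have h4 : ‖b - a‖ = 0 := by nlinarith [norm_nonneg (b-a), sq_nonneg ‖b-a‖]
  have h5 := sub_eq_zero.mp (norm_eq_zero.mp h4)
  exact h5.symm

lemma eig_mul_conj' {S : (H × ℂ) →L[ℂ] (H × ℂ)}
    (hS : ∀ u v : H × ℂ, formA (S u) (S v) = formA u v) {u v : H × ℂ} {γ δ : ℂ}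
    (hu : S u = γ • u) (hv : S v = δ • v) (hne : formA u v ≠ 0) :
    γ * (starRingEnd ℂ) δ = 1 := by
  have h := hS u v
  rw [hu, hv, formA_smul_left', formA_smul_right'] at h
  have h2 : (γ * (starRingEnd ℂ) δ - 1) * formA u v = 0 := by linear_combination h
  rcases mul_eq_zero.mp h2 with h3 | h3
  · linear_combination h3
  · exact absurd h3 hne

/-- midpoint norm: if ‖x‖=‖y‖=1, x ≠ y then ‖2⁻¹•(x+y)‖ < 1 -/
lemma midpoint_norm_lt (x y : H) (hx : ‖x‖ = 1) (hy : ‖y‖ = 1) (hxy : x ≠ y) :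
    ‖((2:ℂ)⁻¹ • (x + y) : H)‖ < 1 := by
  have h2 : ‖y - x‖^2 = ‖y‖^2 - 2 * RCLike.re (inner ℂ y x : ℂ) + ‖x‖^2 := norm_sub_sq y x
  have hpos : 0 < ‖y - x‖ := by
    rw [norm_pos_iff, sub_ne_zero]; exact fun h => hxy h.symm
  have hre : RCLike.re (inner ℂ y x : ℂ) < 1 := by nlinarith
  have hadd : ‖x + y‖^2 = ‖x‖^2 + 2 * RCLike.re (inner ℂ x y : ℂ) + ‖y‖^2 := norm_add_sq x y
  have hsymm : RCLike.re (inner ℂ x y : ℂ) = RCLike.re (inner ℂ y x : ℂ) := by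
    exact inner_re_symm x y
  have hlt : ‖x + y‖^2 < 4 := by rw [hadd, hsymm, hx, hy]; nlinarith
  have hnn : ‖x + y‖ < 2 := by nlinarith [norm_nonneg (x+y)]
  rw [norm_smul]
  simp only [norm_inv]
  have : ‖(2:ℂ)‖ = 2 := by norm_num
  rw [this]
  linarith [norm_nonneg (x+y)]

/-- two distinct boundary eigenvectors with equal eigenvalue give an elliptic element
    with the same eigenvalue, eigenvector the midpoint. -/
lemma elliptic_of_two {S : (H × ℂ) →L[ℂ] (H × ℂ)} {x y : H} {κ : ℂ}
    (hx : ‖x‖ = 1) (hy : ‖y‖ = 1) (hxy : x ≠ y)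
    (hSx : S (x,1) = κ • ((x,1) : H × ℂ)) (hSy : S (y,1) = κ • ((y,1) : H × ℂ)) :
    IsEllipticG S := by
  refine ⟨(2:ℂ)⁻¹ • (x + y), midpoint_norm_lt x y hx hy hxy, κ, ?_⟩
  have hpair : (((2:ℂ)⁻¹ • (x + y), (1:ℂ)) : H × ℂ) = (2:ℂ)⁻¹ • (((x,1) : H × ℂ) + (y,1)) := by
    ext
    · simp
    · norm_num
  rw [hpair, map_smul, map_add, hSx, hSy, ← smul_add, smul_comm]

lemma eigvec_second_ne {y : H} {μ ν : ℂ} (h : μ • ((y,1) : H × ℂ) = ν • ((y,1) : H × ℂ)) : μ = ν := by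
  have := congrArg Prod.snd h
  simpa using this

/-- S commutes with T, transfers eigenvector lines -/
lemma transfer {T S : (H × ℂ) →L[ℂ] (H × ℂ)} (hS : memG S)
    (hcomm : S ∘L T = T ∘L S) {x y : H} {μ ν : ℂ}
    (hball : fixedBall T = {x, y}) (hxn : ‖x‖ = 1)
    (hx : T (x,1) = μ • ((x,1) : H × ℂ)) (hy : T (y,1) = ν • ((y,1) : H × ℂ))
    (hμν : μ ≠ ν) :
    ∃ α : ℂ, α ≠ 0 ∧ S (x,1) = α • ((x,1) : H × ℂ) := by
  obtain ⟨u, hu⟩ : ∃ u, S ((x,1) : H × ℂ) = u := ⟨_, rfl⟩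
  have hTu : T u = μ • u := by
    have h1 : S (T (x,1)) = T (S (x,1)) := by
      have := congrArg (fun f => (f : (H × ℂ) →L[ℂ] (H × ℂ)) ((x,1) : H × ℂ)) hcomm
      simpa using this
    rw [hx, map_smul, hu] at h1
    rw [← h1]
  have hq : formA u u = 0 := by
    rw [← hu, hS.2]
    rw [formA_self']
    simp [hxn]
  rw [formA_self'] at hq
  have hq2 : ‖u.1‖^2 = (‖u.2‖)^2 := by
    have := sub_eq_zero.mp hq
    exact_mod_cast this
  have hz : u.2 ≠ 0 := by
    intro h0
    rw [h0] at hq2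
    simp at hq2
    have hu0 : u = 0 := by
      ext
      · exact hq2
      · exact h0
    have : ((x,1) : H × ℂ) = 0 := hS.1.1 (by rw [hu, hu0, map_zero])
    have := congrArg Prod.snd this
    simp at this
  have hn1 : ‖u.1‖ = ‖u.2‖ :=
    (pow_left_inj₀ (norm_nonneg _) (norm_nonneg _) (two_ne_zero)).mp hq2
  set x' := (u.2)⁻¹ • u.1 with hx'
  have hx'pair : ((x', (1:ℂ)) : H × ℂ) = (u.2)⁻¹ • u := by
    ext
    · simp [hx']
    · simp [inv_mul_cancel₀ hz]
  have hx'n : ‖x'‖ = 1 := by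
    rw [hx', norm_smul, hn1]
    simp [inv_mul_cancel₀ (norm_ne_zero_iff.mpr hz)]
  have hx'fix : T ((x',1) : H × ℂ) = μ • ((x',1) : H × ℂ) := by
    rw [hx'pair, map_smul, hTu, smul_comm]
  have hmem : x' ∈ fixedBall T := ⟨le_of_eq hx'n, μ, hx'fix⟩
  rw [hball] at hmem
  rcases hmem with h | h
  · refine ⟨u.2, hz, ?_⟩
    have h2 : ((x,1) : H × ℂ) = (u.2)⁻¹ • u := by rw [← h]; exact hx'pair
    rw [hu, h2, smul_smul, mul_inv_cancel₀ hz, one_smul]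
  · exfalso
    rw [h] at hx'fix
    rw [hy] at hx'fix
    exact hμν (eigvec_second_ne hx'fix).symm

/-- an element of `G` commuting with a hyperbolic isometry is either
hyperbolic or boundary elliptic; in particular it is neither parabolic nor regular
elliptic. -/
theorem commutes_with_hyperbolic (T S : (H × ℂ) →L[ℂ] (H × ℂ))
    (hT : memG T) (hhyp : IsHyperbolicG T)
    (hS : memG S) (hcomm : S ∘L T = T ∘L S) :
    (IsHyperbolicG S ∨ IsBoundaryEllipticG S) ∧
    ¬ IsParabolicG S ∧ ¬ IsRegularEllipticG S := by
  obtain ⟨hTne, x, y, hxy, hball⟩ := hhyp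
  have hxmem : x ∈ fixedBall T := by rw [hball]; left; rfl
  have hymem : y ∈ fixedBall T := by rw [hball]; right; rfl
  obtain ⟨hx1, μ, hμ⟩ := hxmem
  obtain ⟨hy1, ν, hν⟩ := hymem
  have hxn : ‖x‖ = 1 := by
    rcases lt_or_eq_of_le hx1 with h | h
    · exact absurd ⟨x, h, μ, hμ⟩ hTne
    · exact h
  have hyn : ‖y‖ = 1 := by
    rcases lt_or_eq_of_le hy1 with h | h
    · exact absurd ⟨y, h, ν, hν⟩ hTne
    · exact h
  have hip : (inner ℂ y x : ℂ) ≠ 1 := fun h => hxy (inner_eq_one' x y hx1 hy1 h)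
  have hp : formA ((x,1) : H × ℂ) ((y,1) : H × ℂ) ≠ 0 := by
    rw [formA_pair']; exact sub_ne_zero.mpr hip
  have hμν : μ ≠ ν := by
    intro h
    rw [h] at hμ
    exact hTne (elliptic_of_two hxn hyn hxy hμ hν)
  obtain ⟨α, hα0, hSx⟩ := transfer hS hcomm hball hxn hμ hν hμν
  obtain ⟨β, hβ0, hSy⟩ := transfer hS hcomm (by rw [hball]; exact Set.pair_comm x y) hyn hν hμ (Ne.symm hμν)
  -- x, y ∈ fixedBall S
  have hxS : x ∈ fixedBall S := ⟨hx1, α, hSx⟩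
  have hyS : y ∈ fixedBall S := ⟨hy1, β, hSy⟩
  have hαβ : α * (starRingEnd ℂ) β = 1 := eig_mul_conj' hS.2 hSx hSy hp
  have hmain : IsHyperbolicG S ∨ IsBoundaryEllipticG S := by
    by_cases hab : α = β
    · -- boundary elliptic
      right
      subst hab
      refine ⟨elliptic_of_two hxn hyn hxy hSx hSy, α, ?_, ?_⟩
      · refine ⟨((x,1) : H × ℂ) + ((y,1) : H × ℂ), ?_, ‖x + y‖^2 - 4, ?_, ?_⟩
        · rw [map_add, hSx, hSy, smul_add]
        · have h2 : ‖y - x‖^2 = ‖y‖^2 - 2 * RCLike.re (inner ℂ y x : ℂ) + ‖x‖^2 := norm_sub_sq y x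
          have hpos : 0 < ‖y - x‖ := by
            rw [norm_pos_iff, sub_ne_zero]; exact fun h => hxy h.symm
          have hre : RCLike.re (inner ℂ y x : ℂ) < 1 := by nlinarith
          have hadd : ‖x + y‖^2 = ‖x‖^2 + 2 * RCLike.re (inner ℂ x y : ℂ) + ‖y‖^2 := norm_add_sq x y
          have hsymm : RCLike.re (inner ℂ x y : ℂ) = RCLike.re (inner ℂ y x : ℂ) := by
            exact inner_re_symm x y
          nlinarith
        · have : (((x,1) : H × ℂ) + ((y,1) : H × ℂ)) = ((x + y, (2:ℂ)) : H × ℂ) := by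
            ext <;> norm_num
          rw [this, formA_self']
          push_cast
          norm_num
      · refine ⟨((x,1) : H × ℂ), ((y,1) : H × ℂ), hSx, hSy, ?_⟩
        rw [LinearIndependent.pair_iff]
        intro s t hst
        have hsnd := congrArg Prod.snd hst
        simp at hsnd
        have hfst := congrArg Prod.fst hst
        simp at hfst
        have ht : t = -s := by linear_combination hsnd
        rw [ht, neg_smul, ← sub_eq_add_neg, ← smul_sub] at hfst
        rcases smul_eq_zero.mp hfst with h | h
        · exact ⟨h, by rw [ht, h, neg_zero]⟩
        · exact absurd (sub_eq_zero.mp h) hxy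
    · -- hyperbolic
      left
      have hkey : ∀ z : H, ‖z‖ ≤ 1 → z ≠ x → z ≠ y →
          ∀ γ : ℂ, S (z,1) = γ • ((z,1) : H × ℂ) → False := by
        intro z hz hzx hzy γ hγ
        have hne1 : formA ((z,1) : H × ℂ) ((x,1) : H × ℂ) ≠ 0 := by
          rw [formA_pair']
          exact sub_ne_zero.mpr (fun h => hzx (inner_eq_one' z x hz hx1 h))
        have hne2 : formA ((z,1) : H × ℂ) ((y,1) : H × ℂ) ≠ 0 := by
          rw [formA_pair']
          exact sub_ne_zero.mpr (fun h => hzy (inner_eq_one' z y hz hy1 h))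
        have e1 : γ * (starRingEnd ℂ) α = 1 := eig_mul_conj' hS.2 hγ hSx hne1
        have e2 : γ * (starRingEnd ℂ) β = 1 := eig_mul_conj' hS.2 hγ hSy hne2
        have hγ0 : γ ≠ 0 := by
          intro h0; rw [h0, zero_mul] at e1; exact zero_ne_one e1
        have : (starRingEnd ℂ) α = (starRingEnd ℂ) β :=
          mul_left_cancel₀ hγ0 (e1.trans e2.symm)
        exact hab (RingHom.injective _ this)
      constructor
      · rintro ⟨w, hw, γ, hγ⟩
        have hwx : w ≠ x := by
          intro h; rw [h] at hw; rw [hxn] at hw; exact lt_irrefl 1 hw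
        have hwy : w ≠ y := by
          intro h; rw [h] at hw; rw [hyn] at hw; exact lt_irrefl 1 hw
        exact hkey w (le_of_lt hw) hwx hwy γ hγ
      · refine ⟨x, y, hxy, ?_⟩
        ext z
        constructor
        · rintro ⟨hz1, γ, hγ⟩
          by_contra hzc
          simp only [Set.mem_insert_iff, Set.mem_singleton_iff] at hzc
          push_neg at hzc
          exact hkey z hz1 hzc.1 hzc.2 γ hγ
        · intro hz
          rcases hz with h | h
          · rw [h]; exact hxS
          · rw [h]; exact hyS
  refine ⟨hmain, ?_, ?_⟩
  · rintro ⟨_, z, hz⟩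
    have h1 : x ∈ ({z} : Set H) := by rw [← hz]; exact hxS
    have h2 : y ∈ ({z} : Set H) := by rw [← hz]; exact hyS
    rw [Set.mem_singleton_iff] at h1 h2
    exact hxy (h1.trans h2.symm)
  · rintro ⟨hell, hnb⟩
    rcases hmain with h | h
    · exact h.1 hell
    · exact hnb h


end
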